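/- Let Δt > 0, K a positive integer, 0 < γ ≤ Γ with γ/Δt and Γ/Δt positive integers such that Γ/Δt ≤ K, and η⁺, η⁻ ∈ (0,1]. Let 𝐱^b, 𝐱^r ∈ ℝ^K have nonnegative components, let 𝐝 ∈ ℝ^K, and fix y₀ ∈ ℝ and k ∈ {0,1,…,K}. Define m_l = max{ η⁺ x^r_l, (1/η⁻) x^r_l − (1/η⁻ − η⁺) x^b_l } for l ∈ {1,…,K}. Then the non-convex worst-case minimum admits the exact linear decision rule reformulation min_{𝛅 ∈ D_K} y_k(𝐱^b,𝐱^r,𝛅,y₀) = y₀ + min_{𝛅 ∈ D_K⁺} Δt Σ_{l=1}^{k} ( η⁺ x^b_l − m_l δ_l − d_l ), where both minima are attained. -/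

import Mathlib

open MeasureTheory Set

noncomputable section

/-- The continuous-time uncertainty set `D` of measurable frequency-deviation
scenarios `δ : [0,T] → [-1,1]` whose total absolute deviation over every
backward window of length `Γ` is at most `γ`. -/
def Dset (T Γ γ : ℝ) : Set (ℝ → ℝ) :=
  {δ | Measurable δ ∧ (∀ t ∈ Icc (0:ℝ) T, δ t ∈ Icc (-1:ℝ) 1) ∧
    ∀ t ∈ Icc (0:ℝ) T, (∫ s in (max (t - Γ) 0)..t, |δ s|) ≤ γ}

/-- The nonnegative part `D⁺` of the continuous uncertainty set. -/
def DsetPlus (T Γ γ : ℝ) : Set (ℝ → ℝ) :=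
  Dset T Γ γ ∩ {δ | ∀ t ∈ Icc (0:ℝ) T, δ t ∈ Icc (0:ℝ) 1}

/-- The discrete uncertainty set `D_K` (with `0`-based indexing): vectors in
`[-1,1]^K` whose sum of absolute values over each backward window of `W = Γ/Δt`
periods is at most `g = γ/Δt`. -/
def DK (K W g : ℕ) : Set (Fin K → ℝ) :=
  {δ | (∀ l, |δ l| ≤ 1) ∧ ∀ k : Fin K,
    (∑ l ∈ Finset.univ.filter
      (fun l : Fin K => (k : ℕ) + 1 - W ≤ (l : ℕ) ∧ (l : ℕ) ≤ (k : ℕ)), |δ l|) ≤ (g : ℝ)}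

/-- The nonnegative part `D_K⁺` of the discrete uncertainty set. -/
def DKplus (K W g : ℕ) : Set (Fin K → ℝ) :=
  DK K W g ∩ {δ | ∀ l, 0 ≤ δ l}

/-- The lifting operator `L` mapping a vector to the piecewise constant function
with value `v k` on `[kΔt, (k+1)Δt)` (0-based), and `v (K-1)` at `t = KΔt`. -/
def lift (Δt : ℝ) {K : ℕ} (v : Fin K → ℝ) : ℝ → ℝ := fun t =>
  if h : min (⌊t / Δt⌋.toNat) (K - 1) < K then v ⟨min (⌊t / Δt⌋.toNat) (K - 1), h⟩ else 0

/-- The averaging operator `L†` mapping a function to its vector of averages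
over the trading intervals. -/
def avg (Δt : ℝ) (K : ℕ) (w : ℝ → ℝ) : Fin K → ℝ := fun k =>
  (1 / Δt) * ∫ s in (((k : ℕ) : ℝ) * Δt)..((((k : ℕ) : ℝ) + 1) * Δt), w s

/-- The integrand of the continuous-time state-of-charge. -/
def socIntegrand (ηp ηm : ℝ) (xb xr δ d : ℝ → ℝ) (s : ℝ) : ℝ :=
  ηp * max (xb s + δ s * xr s) 0 - (1 / ηm) * max (-(xb s + δ s * xr s)) 0 - d s

/-- The continuous-time state-of-charge `y(x^b, x^r, δ, y₀, t)`. -/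
def soc (ηp ηm : ℝ) (xb xr δ d : ℝ → ℝ) (y0 t : ℝ) : ℝ :=
  y0 + ∫ s in (0:ℝ)..t, socIntegrand ηp ηm xb xr δ d s

/-- The discrete-time state-of-charge `y_k(𝐱^b, 𝐱^r, 𝛅, y₀)` (0-based indexing:
the sum extends over the first `k` components). -/
def ysoc (Δt ηp ηm : ℝ) {K : ℕ} (xb xr δ d : Fin K → ℝ) (y0 : ℝ) (k : ℕ) : ℝ :=
  y0 + Δt * ∑ l ∈ Finset.univ.filter (fun l : Fin K => (l : ℕ) < k),
    (ηp * max (xb l + δ l * xr l) 0 - (1 / ηm) * max (-(xb l + δ l * xr l)) 0 - d l)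

/-- exact linear decision rule reformulation: the worst-case
minimum of the discrete state-of-charge over `D_K` is attained and equals `y₀`
plus the minimum over `D_K⁺` of the linear-decision-rule expression built from
`m_l = max{η⁺x^r_l, (1/η⁻)x^r_l − Δη x^b_l}`. -/
private lemma floor_antitone (x : ℝ) : Antitone fun θ : ℝ => ((⌊x - θ⌋ : ℤ) : ℝ) := by
  intro a b hab
  simp only []
  exact_mod_cast Int.floor_le_floor (by linarith : x - b ≤ x - a)

private lemma floor_integral (x : ℝ) :
    ∫ θ in (0:ℝ)..1, ((⌊x - θ⌋ : ℤ) : ℝ) = x - 1 := by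
  have hanti := floor_antitone x
  have hfl : (⌊x⌋ : ℝ) ≤ x := Int.floor_le x
  have hfl2 : x < (⌊x⌋ : ℝ) + 1 := Int.lt_floor_add_one x
  set r : ℝ := x - ⌊x⌋ with hr
  have hr0 : 0 ≤ r := by rw [hr]; linarith
  have hr1 : r < 1 := by rw [hr]; linarith
  have h1 : ∫ θ in (0:ℝ)..r, ((⌊x - θ⌋ : ℤ) : ℝ) = r * ⌊x⌋ := by
    rw [intervalIntegral.integral_of_le hr0,
      MeasureTheory.setIntegral_congr_fun (g := fun _ : ℝ => ((⌊x⌋ : ℤ) : ℝ))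
        measurableSet_Ioc ?_,
      MeasureTheory.setIntegral_const, measureReal_def, Real.volume_Ioc, smul_eq_mul,
      ENNReal.toReal_ofReal (by linarith)]
    · ring
    · intro θ hθ
      obtain ⟨hθ1, hθ2⟩ := hθ
      have : ⌊x - θ⌋ = ⌊x⌋ := by
        rw [Int.floor_eq_iff]
        constructor
        · linarith
        · push_cast; linarith
      simp only [this]
  have h2 : ∫ θ in r..(1:ℝ), ((⌊x - θ⌋ : ℤ) : ℝ) = (1 - r) * (⌊x⌋ - 1) := by
    rw [intervalIntegral.integral_of_le (le_of_lt hr1),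
      MeasureTheory.setIntegral_congr_fun (g := fun _ : ℝ => ((⌊x⌋ - 1 : ℤ) : ℝ))
        measurableSet_Ioc ?_,
      MeasureTheory.setIntegral_const, measureReal_def, Real.volume_Ioc, smul_eq_mul,
      ENNReal.toReal_ofReal (by linarith)]
    · push_cast; ring
    · intro θ hθ
      obtain ⟨hθ1, hθ2⟩ := hθ
      have : ⌊x - θ⌋ = ⌊x⌋ - 1 := by
        rw [Int.floor_eq_iff]
        constructor
        · push_cast; linarith
        · push_cast; linarith
      simp only [this]
  have hadd := intervalIntegral.integral_add_adjacent_intervals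
    (hanti.intervalIntegrable (a := 0) (b := r) (μ := volume))
    (hanti.intervalIntegrable (a := r) (b := 1) (μ := volume))
  rw [h1, h2] at hadd
  rw [← hadd]; ring

/-- Threshold rounding: any `[0,1]`-valued sequence can be rounded to a `{0,1}`-valued
sequence preserving all integer interval-sum budgets and not decreasing a fixed
nonnegative-weight objective. -/
private lemma exists_rounding (N : ℕ) (u m : ℕ → ℝ) (hu0 : ∀ n, 0 ≤ u n) (hu1 : ∀ n, u n ≤ 1)
    (hm : ∀ n, 0 ≤ m n) :
    ∃ v : ℕ → ℝ, (∀ n, v n = 0 ∨ v n = 1) ∧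
      (∀ a b G : ℕ, (∑ n ∈ Finset.Ico a b, u n) ≤ (G:ℝ) → (∑ n ∈ Finset.Ico a b, v n) ≤ (G:ℝ)) ∧
      (∑ n ∈ Finset.range N, m n * u n) ≤ ∑ n ∈ Finset.range N, m n * v n := by
  classical
  set S : ℕ → ℝ := fun j => ∑ n ∈ Finset.range j, u n with hS
  have hSsucc : ∀ n, S (n + 1) = S n + u n := fun n => Finset.sum_range_succ u n
  set w : ℝ → ℕ → ℝ := fun θ n => ((⌊S (n+1) - θ⌋ : ℤ) : ℝ) - ((⌊S n - θ⌋ : ℤ) : ℝ) with hw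
  -- each w θ n is 0 or 1
  have hfloor_le : ∀ θ n, ⌊S n - θ⌋ ≤ ⌊S (n+1) - θ⌋ := by
    intro θ n
    exact Int.floor_le_floor (by have := hu0 n; rw [hSsucc n]; linarith)
  have hfloor_ge : ∀ θ n, ⌊S (n+1) - θ⌋ ≤ ⌊S n - θ⌋ + 1 := by
    intro θ n
    have h1 : S (n+1) - θ ≤ (S n - θ) + 1 := by have := hu1 n; rw [hSsucc n]; linarith
    calc ⌊S (n+1) - θ⌋ ≤ ⌊(S n - θ) + 1⌋ := Int.floor_le_floor h1
      _ = ⌊S n - θ⌋ + 1 := Int.floor_add_one _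
  have hw01 : ∀ θ n, w θ n = 0 ∨ w θ n = 1 := by
    intro θ n
    have h1 := hfloor_le θ n
    have h2 := hfloor_ge θ n
    rcases (by omega : ⌊S (n+1) - θ⌋ = ⌊S n - θ⌋ ∨ ⌊S (n+1) - θ⌋ = ⌊S n - θ⌋ + 1) with h | h <;>
      [left; right] <;> rw [hw] <;> simp only [h] <;> push_cast <;> ring
  -- interval sums of w telescope
  have hIco_u : ∀ a b : ℕ, a ≤ b → (∑ n ∈ Finset.Ico a b, u n) = S b - S a := by
    intro a b hab
    rw [hS]
    exact Finset.sum_Ico_eq_sub u hab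
  have hIco_w : ∀ θ, ∀ a b : ℕ, a ≤ b →
      (∑ n ∈ Finset.Ico a b, w θ n) = ((⌊S b - θ⌋ : ℤ) : ℝ) - ((⌊S a - θ⌋ : ℤ) : ℝ) := by
    intro θ a b hab
    rw [Finset.sum_Ico_eq_sub _ hab, Finset.sum_range_sub (fun n => ((⌊S n - θ⌋ : ℤ) : ℝ)),
      Finset.sum_range_sub (fun n => ((⌊S n - θ⌋ : ℤ) : ℝ))]
    ring
  have hwin : ∀ θ, ∀ a b G : ℕ, (∑ n ∈ Finset.Ico a b, u n) ≤ (G:ℝ) →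
      (∑ n ∈ Finset.Ico a b, w θ n) ≤ (G:ℝ) := by
    intro θ a b G hub
    rcases le_or_gt a b with hab | hab
    · rw [hIco_w θ a b hab]
      rw [hIco_u a b hab] at hub
      have h1 : S b - θ ≤ (S a - θ) + (G:ℕ) := by push_cast; linarith
      have h2 : ⌊S b - θ⌋ ≤ ⌊S a - θ⌋ + G := by
        calc ⌊S b - θ⌋ ≤ ⌊(S a - θ) + (G:ℕ)⌋ := Int.floor_le_floor h1
          _ = ⌊S a - θ⌋ + G := Int.floor_add_natCast _ _
      have h3 : ((⌊S b - θ⌋ : ℤ) : ℝ) ≤ ((⌊S a - θ⌋ : ℤ) : ℝ) + (G:ℝ) := by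
        exact_mod_cast h2
      linarith
    · rw [Finset.Ico_eq_empty (by omega)]
      simp
  -- objective: find a good θ via the integral average
  have hobj : ∃ θ : ℝ, (∑ n ∈ Finset.range N, m n * u n) ≤ ∑ n ∈ Finset.range N, m n * w θ n := by
    by_contra hcon
    push_neg at hcon
    set T : ℝ := ∑ n ∈ Finset.range N, m n * u n with hT
    set h : ℝ → ℝ := fun θ => ∑ n ∈ Finset.range N, m n * w θ n with hh
    have hint_term : ∀ n ∈ Finset.range N,
        IntervalIntegrable (fun θ => m n * w θ n) volume 0 1 := by
      intro n _
      exact (((floor_antitone (S (n+1))).intervalIntegrable).sub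
        ((floor_antitone (S n)).intervalIntegrable)).const_mul (m n)
    have hint : IntervalIntegrable h volume 0 1 := by
      rw [hh]
      have heq : (fun θ => ∑ n ∈ Finset.range N, m n * w θ n)
          = ∑ i ∈ Finset.range N, (fun θ => m i * w θ i) := by
        funext θ; simp [Finset.sum_apply]
      rw [heq]
      exact IntervalIntegrable.sum (Finset.range N) (f := fun n θ => m n * w θ n) hint_term
    have hval : ∫ θ in (0:ℝ)..1, h θ = T := by
      rw [hh]
      rw [intervalIntegral.integral_finset_sum (f := fun n θ => m n * w θ n) hint_term]
      rw [hT]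
      apply Finset.sum_congr rfl
      intro n _
      rw [intervalIntegral.integral_const_mul]
      congr 1
      have : ∫ θ in (0:ℝ)..1, w θ n
          = (∫ θ in (0:ℝ)..1, ((⌊S (n+1) - θ⌋ : ℤ) : ℝ))
            - ∫ θ in (0:ℝ)..1, ((⌊S n - θ⌋ : ℤ) : ℝ) := by
        rw [hw]
        exact intervalIntegral.integral_sub ((floor_antitone (S (n+1))).intervalIntegrable)
          ((floor_antitone (S n)).intervalIntegrable)
      rw [this, floor_integral, floor_integral, hSsucc n]
      ring
    -- T - h is positive everywhere yet integrates to 0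
    have hpos : ∀ θ, 0 < T - h θ := fun θ => by have := hcon θ; linarith
    have hzero : ∫ θ in (0:ℝ)..1, (T - h θ) = 0 := by
      rw [intervalIntegral.integral_sub intervalIntegrable_const hint, hval,
        intervalIntegral.integral_const]
      simp
    have hae := (intervalIntegral.integral_eq_zero_iff_of_le_of_nonneg_ae zero_le_one
      (Filter.Eventually.of_forall (fun θ => (hpos θ).le))
      (intervalIntegrable_const.sub hint)).mp hzero
    have hne : {θ : ℝ | ¬ (T - h θ = 0)} = Set.univ := by
      ext θ; simp [ne_of_gt (hpos θ)]
    have h0 := hae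
    rw [Filter.EventuallyEq, ae_iff] at h0
    simp only [Pi.zero_apply] at h0
    rw [hne, Measure.restrict_apply_univ, Real.volume_Ioc] at h0
    norm_num at h0
  obtain ⟨θ, hθ⟩ := hobj
  exact ⟨w θ, hw01 θ, hwin θ, hθ⟩

/-- Pointwise lower bound: the SOC integrand dominates the LDR expression. -/
private lemma point_ge (ηp ηm xb xr δ : ℝ) (hp : 0 < ηp) (hp1 : ηp ≤ 1)
    (hm0 : 0 < ηm) (hm1 : ηm ≤ 1) (hxb : 0 ≤ xb) (hxr : 0 ≤ xr) (hδ : |δ| ≤ 1) :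
    ηp * xb - max (ηp * xr) ((1/ηm) * xr - (1/ηm - ηp) * xb) * |δ|
      ≤ ηp * max (xb + δ * xr) 0 - (1/ηm) * max (-(xb + δ * xr)) 0 := by
  have hinv : 1 ≤ 1/ηm := by rw [le_div_iff₀ hm0]; linarith
  have hd : 0 ≤ 1/ηm - ηp := by linarith
  have hm1' : ηp * xr ≤ max (ηp * xr) ((1/ηm) * xr - (1/ηm - ηp) * xb) := le_max_left _ _
  have hm2' : (1/ηm) * xr - (1/ηm - ηp) * xb
      ≤ max (ηp * xr) ((1/ηm) * xr - (1/ηm - ηp) * xb) := le_max_right _ _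
  rcases le_or_gt 0 δ with hδ0 | hδ0
  · rw [abs_of_nonneg hδ0]
    have hz : 0 ≤ xb + δ * xr := by positivity
    rw [max_eq_left hz, max_eq_right (by linarith : -(xb + δ * xr) ≤ 0)]
    have h1 : 0 ≤ max (ηp * xr) ((1/ηm) * xr - (1/ηm - ηp) * xb) * δ :=
      mul_nonneg (le_trans (by positivity) hm1') hδ0
    nlinarith [mul_nonneg (mul_nonneg hp.le hδ0) hxr]
  · rw [abs_of_neg hδ0]
    have hδ1 : -1 ≤ δ := by rw [abs_of_neg hδ0] at hδ; linarith
    rcases le_or_gt 0 (xb + δ * xr) with hz | hz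
    · rw [max_eq_left hz, max_eq_right (by linarith : -(xb + δ * xr) ≤ 0)]
      have key : max (ηp * xr) ((1/ηm) * xr - (1/ηm - ηp) * xb) * δ ≤ (ηp * xr) * δ :=
        mul_le_mul_of_nonpos_right hm1' hδ0.le
      nlinarith
    · rw [max_eq_right hz.le, max_eq_left (by linarith : 0 ≤ -(xb + δ * xr))]
      have key : max (ηp * xr) ((1/ηm) * xr - (1/ηm - ηp) * xb) * δ
          ≤ ((1/ηm) * xr - (1/ηm - ηp) * xb) * δ :=
        mul_le_mul_of_nonpos_right hm2' hδ0.le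
      have key2 : 0 ≤ (1/ηm - ηp) * xb * (1 + δ) :=
        mul_nonneg (mul_nonneg hd hxb) (by linarith)
      nlinarith
/-- Pointwise equality at `δ = -1`. -/
private lemma point_eq_neg_one (ηp ηm xb xr : ℝ) (hp : 0 < ηp) (hp1 : ηp ≤ 1)
    (hm0 : 0 < ηm) (hm1 : ηm ≤ 1) (hxb : 0 ≤ xb) (hxr : 0 ≤ xr) :
    ηp * max (xb + (-1) * xr) 0 - (1/ηm) * max (-(xb + (-1) * xr)) 0
      = ηp * xb - max (ηp * xr) ((1/ηm) * xr - (1/ηm - ηp) * xb) * 1 := by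
  have hinv : 1 ≤ 1/ηm := by rw [le_div_iff₀ hm0]; linarith
  have hd : 0 ≤ 1/ηm - ηp := by linarith
  rcases le_or_gt xr xb with h | h
  · rw [max_eq_left (by linarith : 0 ≤ xb + (-1) * xr),
      max_eq_right (by linarith : -(xb + (-1) * xr) ≤ 0),
      max_eq_left (by nlinarith : (1/ηm) * xr - (1/ηm - ηp) * xb ≤ ηp * xr)]
    ring
  · rw [max_eq_right (by linarith : xb + (-1) * xr ≤ 0),
      max_eq_left (by linarith : 0 ≤ -(xb + (-1) * xr)),
      max_eq_right (by nlinarith : ηp * xr ≤ (1/ηm) * xr - (1/ηm - ηp) * xb)]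
    ring
/-- Pointwise equality at `δ = 0`. -/
private lemma point_eq_zero (ηp ηm xb xr : ℝ) (hm0 : 0 < ηm) (hxb : 0 ≤ xb) :
    ηp * max (xb + (-0) * xr) 0 - (1/ηm) * max (-(xb + (-0) * xr)) 0
      = ηp * xb - max (ηp * xr) ((1/ηm) * xr - (1/ηm - ηp) * xb) * 0 := by
  rw [max_eq_left (by linarith : 0 ≤ xb + (-0) * xr),
    max_eq_right (by linarith : -(xb + (-0) * xr) ≤ 0)]
  ring

theorem stmt_16 (Δt ηp ηm : ℝ) (K W g : ℕ) (hΔt : 0 < Δt)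
    (hg : 0 < g) (hgW : g ≤ W) (hWK : W ≤ K)
    (hηp : ηp ∈ Ioc (0:ℝ) 1) (hηm : ηm ∈ Ioc (0:ℝ) 1)
    (xb xr d : Fin K → ℝ) (hxb : ∀ l, 0 ≤ xb l) (hxr : ∀ l, 0 ≤ xr l)
    (y0 : ℝ) (k : ℕ) (hk : k ≤ K) :
    ∃ M : ℝ,
      IsLeast {v : ℝ | ∃ δ ∈ DK K W g, v = ysoc Δt ηp ηm xb xr δ d y0 k} M ∧
      IsLeast {v : ℝ | ∃ δ ∈ DKplus K W g,
        v = y0 + Δt * ∑ l ∈ Finset.univ.filter (fun l : Fin K => (l : ℕ) < k),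
          (ηp * xb l -
            max (ηp * xr l) ((1 / ηm) * xr l - (1 / ηm - ηp) * xb l) * δ l - d l)} M := by
  classical
  obtain ⟨hp0, hp1⟩ := hηp
  obtain ⟨hem0, hem1⟩ := hηm
  set m : Fin K → ℝ := fun l => max (ηp * xr l) ((1/ηm) * xr l - (1/ηm - ηp) * xb l)
    with hmdef
  have hm0 : ∀ l, 0 ≤ m l := fun l =>
    le_trans (mul_nonneg hp0.le (hxr l)) (le_max_left _ _)
  set F : Finset (Fin K) := Finset.univ.filter (fun l : Fin K => (l : ℕ) < k) with hF
  set val : (Fin K → ℝ) → ℝ :=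
    fun u => y0 + Δt * ∑ l ∈ F, (ηp * xb l - m l * u l - d l) with hvaldef
  -- extension operator to ℕ-indexed sequences
  set ext : (Fin K → ℝ) → ℕ → ℝ :=
    fun u n => if h : n < K then u ⟨n, h⟩ else 0 with hext
  have hext_eq : ∀ (u : Fin K → ℝ) (l : Fin K), ext u (l : ℕ) = u l := by
    intro u l
    simp [hext, l.isLt]
  -- bridge between Fin-filtered sums and Ico sums
  have hbridge : ∀ (u : Fin K → ℝ) (a k' : ℕ), k' < K →
      (∑ l ∈ Finset.univ.filter (fun l : Fin K => a ≤ (l : ℕ) ∧ (l : ℕ) ≤ k'), u l)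
        = ∑ n ∈ Finset.Ico a (k'+1), ext u n := by
    intro u a k' hk'
    rw [Finset.sum_filter]
    have h1 : ∀ l : Fin K, (if a ≤ (l : ℕ) ∧ (l : ℕ) ≤ k' then u l else 0)
        = (fun n : ℕ => if a ≤ n ∧ n ≤ k' then ext u n else 0) (l : ℕ) := by
      intro l
      simp only [hext_eq]
    rw [Finset.sum_congr rfl (fun l _ => h1 l),
      Fin.sum_univ_eq_sum_range (fun n : ℕ => if a ≤ n ∧ n ≤ k' then ext u n else 0) K,
      ← Finset.sum_filter]
    congr 1
    ext n
    simp only [Finset.mem_filter, Finset.mem_range, Finset.mem_Ico]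
    omega
  -- bridge for the objective sums
  set mext : ℕ → ℝ := fun n => if h : n < K then (if n < k then m ⟨n, h⟩ else 0) else 0
    with hmext
  have hmext0 : ∀ n, 0 ≤ mext n := by
    intro n
    simp only [hmext]
    split
    · split
      · exact hm0 _
      · exact le_rfl
    · exact le_rfl
  have hobj_bridge : ∀ u : Fin K → ℝ,
      (∑ n ∈ Finset.range K, mext n * ext u n) = ∑ l ∈ F, m l * u l := by
    intro u
    rw [← Fin.sum_univ_eq_sum_range (fun n => mext n * ext u n) K, hF, Finset.sum_filter]
    apply Finset.sum_congr rfl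
    intro l _
    simp only [hmext, hext_eq, l.isLt, dif_pos]
    split <;> simp
  -- membership of {0,1}-valued vectors in DKplus given window bounds
  have h01mem : ∀ v : Fin K → ℝ, (∀ l, v l = 0 ∨ v l = 1) →
      (∀ k' : Fin K, (∑ l ∈ Finset.univ.filter
        (fun l : Fin K => (k' : ℕ) + 1 - W ≤ (l : ℕ) ∧ (l : ℕ) ≤ (k' : ℕ)), v l) ≤ (g : ℝ)) →
      v ∈ DKplus K W g := by
    intro v h01 hwin
    have habs : ∀ l, |v l| = v l := by
      intro l
      rcases h01 l with h | h <;> rw [h] <;> norm_num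
    refine ⟨⟨fun l => ?_, fun k' => ?_⟩, fun l => ?_⟩
    · rw [habs l]; rcases h01 l with h | h <;> rw [h] <;> norm_num
    · rw [Finset.sum_congr rfl (fun l _ => habs l)]
      exact hwin k'
    · rcases h01 l with h | h <;> rw [h] <;> norm_num
  -- the rounding step, in Fin form
  have round : ∀ u : Fin K → ℝ, u ∈ DKplus K W g →
      ∃ v : Fin K → ℝ, (∀ l, v l = 0 ∨ v l = 1) ∧ v ∈ DKplus K W g ∧
        (∑ l ∈ F, m l * u l) ≤ ∑ l ∈ F, m l * v l := by
    intro u hu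
    obtain ⟨⟨hu1, huwin⟩, hu0⟩ := hu
    have huabs : ∀ l, |u l| = u l := fun l => abs_of_nonneg (hu0 l)
    have hext0 : ∀ n, 0 ≤ ext u n := by
      intro n
      simp only [hext]
      split
      · exact hu0 _
      · exact le_rfl
    have hext1 : ∀ n, ext u n ≤ 1 := by
      intro n
      simp only [hext]
      split
      · rw [← huabs _]; exact hu1 _
      · norm_num
    obtain ⟨v', hv'01, hv'win, hv'obj⟩ := exists_rounding K (ext u) mext hext0 hext1 hmext0
    set v : Fin K → ℝ := fun l => v' (l : ℕ) with hv
    have hextv : ∀ n ∈ Finset.range K, ext v n = v' n := by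
      intro n hn
      rw [Finset.mem_range] at hn
      simp [hext, hn, hv]
    have hIcoK : ∀ (a k' : ℕ), k' < K → ∀ n ∈ Finset.Ico a (k'+1), n ∈ Finset.range K := by
      intro a k' hk' n hn
      rw [Finset.mem_Ico] at hn
      rw [Finset.mem_range]
      omega
    have h01 : ∀ l, v l = 0 ∨ v l = 1 := fun l => hv'01 _
    refine ⟨v, h01, h01mem v h01 (fun k' => ?_), ?_⟩
    · -- window constraint for v
      rw [hbridge v _ _ k'.isLt,
        Finset.sum_congr rfl (fun n hn => hextv n (hIcoK _ _ k'.isLt n hn))]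
      apply hv'win
      rw [← hbridge u _ _ k'.isLt]
      calc (∑ l ∈ Finset.univ.filter (fun l : Fin K =>
              (k' : ℕ) + 1 - W ≤ (l : ℕ) ∧ (l : ℕ) ≤ (k' : ℕ)), u l)
          = ∑ l ∈ Finset.univ.filter (fun l : Fin K =>
              (k' : ℕ) + 1 - W ≤ (l : ℕ) ∧ (l : ℕ) ≤ (k' : ℕ)), |u l| :=
            Finset.sum_congr rfl (fun l _ => (huabs l).symm)
        _ ≤ (g : ℝ) := huwin k'
    · -- objective
      have e1 : (∑ n ∈ Finset.range K, mext n * v' n)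
          = ∑ n ∈ Finset.range K, mext n * ext v n :=
        Finset.sum_congr rfl (fun n hn => by rw [hextv n hn])
      calc (∑ l ∈ F, m l * u l)
          = ∑ n ∈ Finset.range K, mext n * ext u n := (hobj_bridge u).symm
        _ ≤ ∑ n ∈ Finset.range K, mext n * v' n := hv'obj
        _ = ∑ n ∈ Finset.range K, mext n * ext v n := e1
        _ = ∑ l ∈ F, m l * v l := hobj_bridge v
  -- the candidate finite set of integral points
  set toVec : (Fin K → Bool) → (Fin K → ℝ) := fun b l => if b l then 1 else 0 with htoVec
  have htoVec01 : ∀ b l, toVec b l = 0 ∨ toVec b l = 1 := by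
    intro b l
    simp only [htoVec]
    split
    · right; rfl
    · left; rfl
  set B : Finset (Fin K → Bool) :=
    Finset.univ.filter (fun b => toVec b ∈ DKplus K W g) with hB
  have hBne : (fun _ => false) ∈ B := by
    rw [hB, Finset.mem_filter]
    refine ⟨Finset.mem_univ _, h01mem _ (htoVec01 _) (fun k' => ?_)⟩
    simp [htoVec]
  set S : Finset ℝ := B.image (fun b => val (toVec b)) with hSdef
  have hSne : S.Nonempty := ⟨val (toVec (fun _ => false)), Finset.mem_image_of_mem _ hBne⟩
  set M : ℝ := S.min' hSne with hM
  -- the key lower bound over DKplus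
  have hlow : ∀ u ∈ DKplus K W g, M ≤ val u := by
    intro u hu
    obtain ⟨v, h01, hvmem, hobj⟩ := round u hu
    have hvv : val v ≤ val u := by
      have h1 : ∀ w : Fin K → ℝ, (∑ l ∈ F, (ηp * xb l - m l * w l - d l))
          = (∑ l ∈ F, (ηp * xb l - d l)) - ∑ l ∈ F, m l * w l := by
        intro w
        rw [← Finset.sum_sub_distrib]
        apply Finset.sum_congr rfl
        intro l _
        ring
      rw [hvaldef]
      simp only [h1]
      have := hobj
      nlinarith [hΔt.le]
    have hvS : val v ∈ S := by
      obtain ⟨b, hveq⟩ : ∃ b : Fin K → Bool, toVec b = v := by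
        refine ⟨fun l => if v l = 1 then true else false, funext fun l => ?_⟩
        rcases h01 l with h | h <;> simp [htoVec, h]
      rw [hSdef, ← hveq]
      exact Finset.mem_image_of_mem _ (Finset.mem_filter.mpr
        ⟨Finset.mem_univ _, by rw [hveq]; exact hvmem⟩)
    have := Finset.min'_le S _ hvS
    linarith
  -- M is attained at an integral point v*
  obtain ⟨bstar, hbB, hbval⟩ := Finset.mem_image.mp (S.min'_mem hSne)
  set vstar : Fin K → ℝ := toVec bstar with hvstar
  have hvstar01 : ∀ l, vstar l = 0 ∨ vstar l = 1 := fun l => htoVec01 bstar l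
  have hvstarmem : vstar ∈ DKplus K W g := (Finset.mem_filter.mp hbB).2
  have hvstarval : val vstar = M := hbval
  refine ⟨M, ⟨⟨fun l => -(vstar l), ?_, ?_⟩, ?_⟩, ⟨vstar, hvstarmem, ?_⟩, ?_⟩
  · -- -vstar ∈ DK
    obtain ⟨⟨h1, h2⟩, _⟩ := hvstarmem
    refine ⟨fun l => by rw [abs_neg]; exact h1 l, fun k' => ?_⟩
    calc (∑ l ∈ Finset.univ.filter (fun l : Fin K =>
            (k' : ℕ) + 1 - W ≤ (l : ℕ) ∧ (l : ℕ) ≤ (k' : ℕ)), |-(vstar l)|)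
        = ∑ l ∈ Finset.univ.filter (fun l : Fin K =>
            (k' : ℕ) + 1 - W ≤ (l : ℕ) ∧ (l : ℕ) ≤ (k' : ℕ)), |vstar l| :=
          Finset.sum_congr rfl (fun l _ => by rw [abs_neg])
      _ ≤ (g : ℝ) := h2 k'
  · -- M = ysoc of -vstar
    have hsum : (∑ l ∈ F, (ηp * xb l - m l * vstar l - d l))
        = ∑ l ∈ F, (ηp * max (xb l + (-(vstar l)) * xr l) 0
            - (1 / ηm) * max (-(xb l + (-(vstar l)) * xr l)) 0 - d l) := by
      apply Finset.sum_congr rfl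
      intro l _
      have hml : m l = max (ηp * xr l) ((1/ηm) * xr l - (1/ηm - ηp) * xb l) := rfl
      rcases hvstar01 l with h | h <;> rw [hml, h]
      · have := point_eq_zero ηp ηm (xb l) (xr l) hem0 (hxb l)
        linarith
      · have := point_eq_neg_one ηp ηm (xb l) (xr l) hp0 hp1 hem0 hem1 (hxb l) (hxr l)
        linarith
    have : val vstar = ysoc Δt ηp ηm xb xr (fun l => -(vstar l)) d y0 k := by
      show y0 + Δt * (∑ l ∈ F, (ηp * xb l - m l * vstar l - d l))
        = y0 + Δt * ∑ l ∈ F, (ηp * max (xb l + (-(vstar l)) * xr l) 0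
            - (1 / ηm) * max (-(xb l + (-(vstar l)) * xr l)) 0 - d l)
      rw [hsum]
    rw [← hvstarval, this]
  · -- M is a lower bound for the first set
    rintro x ⟨δ, hδ, rfl⟩
    obtain ⟨h1, h2⟩ := hδ
    set u : Fin K → ℝ := fun l => |δ l| with hu
    have humem : u ∈ DKplus K W g := by
      refine ⟨⟨fun l => by rw [hu]; simp only [abs_abs]; exact h1 l, fun k' => ?_⟩,
        fun l => abs_nonneg _⟩
      calc (∑ l ∈ Finset.univ.filter (fun l : Fin K =>
              (k' : ℕ) + 1 - W ≤ (l : ℕ) ∧ (l : ℕ) ≤ (k' : ℕ)), |u l|)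
          = ∑ l ∈ Finset.univ.filter (fun l : Fin K =>
              (k' : ℕ) + 1 - W ≤ (l : ℕ) ∧ (l : ℕ) ≤ (k' : ℕ)), |δ l| :=
            Finset.sum_congr rfl (fun l _ => by rw [hu]; exact abs_abs _)
        _ ≤ (g : ℝ) := h2 k'
    have hge : val u ≤ ysoc Δt ηp ηm xb xr δ d y0 k := by
      have hsum : (∑ l ∈ F, (ηp * xb l - m l * u l - d l))
          ≤ ∑ l ∈ F, (ηp * max (xb l + δ l * xr l) 0
              - (1 / ηm) * max (-(xb l + δ l * xr l)) 0 - d l) := by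
        apply Finset.sum_le_sum
        intro l _
        have hpt := point_ge ηp ηm (xb l) (xr l) (δ l) hp0 hp1 hem0 hem1 (hxb l) (hxr l) (h1 l)
        have hmu : m l * u l
            = max (ηp * xr l) ((1/ηm) * xr l - (1/ηm - ηp) * xb l) * |δ l| := rfl
        rw [hmu]
        linarith
      show y0 + Δt * (∑ l ∈ F, (ηp * xb l - m l * u l - d l))
        ≤ y0 + Δt * ∑ l ∈ F, (ηp * max (xb l + δ l * xr l) 0
            - (1 / ηm) * max (-(xb l + δ l * xr l)) 0 - d l)
      have := mul_le_mul_of_nonneg_left hsum hΔt.le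
      linarith
    exact le_trans (hlow u humem) hge
  · -- M equals the LDR value at vstar
    rw [← hvstarval]
  · -- M is a lower bound for the second set
    rintro x ⟨δ, hδ, rfl⟩
    exact hlow δ hδ
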